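/- arXiv:2510.18365 — 2 statements merged into one kernel-verified Lean document; each statement's English description precedes it below -/
import Mathlib

section
/- There is a universal constant C > 0 such that: for every k ∈ ℝ with |k| ≥ 1, every t ≥ 0, and all functions ψ, w : [−1,1] → ℂ with ψ twice continuously differentiable, w twice continuously differentiable, ψ(±1) = 0, w(±1) = 0, and ψ''(y) − k² ψ(y) = −w(y) on (−1,1), one has |k|⁴ ‖ψ‖_{L²} ≤ C (1+t)^{−2} ( ‖(e_{k,t} w)''‖²_{L²} + k² ‖(e_{k,t} w)'‖²_{L²} + k⁴ ‖w‖²_{L²} )^{1/2}, where e_{k,t}(y) = e^{i k y t} and derivatives of e_{k,t} w are taken in y. -/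
open Set

/-- The squared `L²` norm of a function on the interval `(-1, 1)`. -/
noncomputable def L2sq (h : ℝ → ℂ) : ℝ :=
  ∫ y in (-1 : ℝ)..1, ‖h y‖ ^ 2

/-- The function `y ↦ e^{ikyt} w(y)`. -/
noncomputable def ew (k t : ℝ) (w : ℝ → ℂ) : ℝ → ℂ :=
  fun y => Complex.exp (Complex.I * (k : ℂ) * (y : ℂ) * (t : ℂ)) * w y

open MeasureTheory intervalIntegral Complex

local notation "conj'" => starRingEnd ℂ

noncomputable def Nrm (h : ℝ → ℂ) : ℝ := Real.sqrt (L2sq h)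

lemma L2sq_nonneg (h : ℝ → ℂ) : 0 ≤ L2sq h :=
  intervalIntegral.integral_nonneg (by norm_num) (fun x _ => by positivity)

lemma Nrm_nonneg (h : ℝ → ℂ) : 0 ≤ Nrm h := Real.sqrt_nonneg _

lemma Nrm_sq (h : ℝ → ℂ) : Nrm h ^ 2 = L2sq h := Real.sq_sqrt (L2sq_nonneg h)

lemma sq_le_aux {a b : ℝ} (ha : 0 ≤ a) (hb : 0 ≤ b) (h : a^2 ≤ b^2) : a ≤ b := by nlinarith

/-- Cauchy–Schwarz for interval integrals of norms. -/
lemma cs_mul (a b : ℝ → ℂ) (ha : Continuous a) (hb : Continuous b) :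
    ∫ y in (-1:ℝ)..1, ‖a y‖ * ‖b y‖ ≤ Nrm a * Nrm b := by
  set A := L2sq a with hA
  set B := L2sq b with hB
  have hA0 : 0 ≤ A := L2sq_nonneg a
  have hB0 : 0 ≤ B := L2sq_nonneg b
  have key : ∀ s : ℝ, 0 < s → (∫ y in (-1:ℝ)..1, ‖a y‖ * ‖b y‖) ≤ (s * A + B / s) / 2 := by
    intro s hs
    have hmono : (∫ y in (-1:ℝ)..1, ‖a y‖ * ‖b y‖)
        ≤ ∫ y in (-1:ℝ)..1, (s * ‖a y‖^2 + ‖b y‖^2 / s) / 2 := by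
      apply intervalIntegral.integral_mono_on (by norm_num)
      · exact ((ha.norm.mul hb.norm)).intervalIntegrable _ _
      · exact ((((continuous_const.mul (ha.norm.pow 2))).add
          ((hb.norm.pow 2).div_const s)).div_const 2).intervalIntegrable _ _
      · intro x _
        have h0 : 0 ≤ (s * ‖a x‖ - ‖b x‖)^2 := sq_nonneg _
        have heq : (s*‖a x‖^2 + ‖b x‖^2/s)/2 - ‖a x‖*‖b x‖
            = (s*‖a x‖ - ‖b x‖)^2/(2*s) := by
          field_simp
          ring
        have h1 : (0:ℝ) ≤ (s*‖a x‖ - ‖b x‖)^2/(2*s) := by positivity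
        linarith [heq ▸ h1]
    calc (∫ y in (-1:ℝ)..1, ‖a y‖ * ‖b y‖) ≤ _ := hmono
      _ = (s * A + B / s) / 2 := by
          rw [intervalIntegral.integral_div, intervalIntegral.integral_add (f := fun x => s * ‖a x‖ ^ 2)
            (g := fun x => ‖b x‖ ^ 2 / s) ((continuous_const.mul (ha.norm.pow 2)).intervalIntegrable _ _)
            (((hb.norm.pow 2).div_const s).intervalIntegrable _ _),
            intervalIntegral.integral_const_mul, intervalIntegral.integral_div]
          rfl
  have hM0 : (0:ℝ) ≤ Nrm a * Nrm b := mul_nonneg (Nrm_nonneg a) (Nrm_nonneg b)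
  rcases eq_or_lt_of_le hA0 with hA' | hA'
  · -- A = 0
    by_contra h
    push_neg at h
    have hMpos : 0 < ∫ y in (-1:ℝ)..1, ‖a y‖ * ‖b y‖ := lt_of_le_of_lt hM0 h
    set M := ∫ y in (-1:ℝ)..1, ‖a y‖ * ‖b y‖
    have hs : (0:ℝ) < B / M + 1 := by positivity
    have := key _ hs
    rw [← hA'] at this
    rw [mul_zero, zero_add] at this
    have hB' : B / (B / M + 1) ≤ M := by
      rw [div_le_iff₀ hs]
      have : M * (B / M + 1) = B + M := by field_simp
      rw [this]
      linarith
    linarith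
  rcases eq_or_lt_of_le hB0 with hB' | hB'
  · by_contra h
    push_neg at h
    have hMpos : 0 < ∫ y in (-1:ℝ)..1, ‖a y‖ * ‖b y‖ := lt_of_le_of_lt hM0 h
    set M := ∫ y in (-1:ℝ)..1, ‖a y‖ * ‖b y‖
    have hs : (0:ℝ) < M / A := by positivity
    have := key _ hs
    rw [← hB'] at this
    have h1 : M / A * A = M := div_mul_cancel₀ _ (ne_of_gt hA')
    have h2 : (0:ℝ) / (M / A) = 0 := zero_div _
    rw [h1, h2, add_zero] at this
    linarith
  · have hs : (0:ℝ) < Real.sqrt B / Real.sqrt A := by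
      positivity
    have := key _ hs
    have hsa : Real.sqrt A ^ 2 = A := Real.sq_sqrt hA0
    have hsb : Real.sqrt B ^ 2 = B := Real.sq_sqrt hB0
    have hsa' : 0 < Real.sqrt A := Real.sqrt_pos.mpr hA'
    have hsb' : 0 < Real.sqrt B := Real.sqrt_pos.mpr hB'
    have heq : (Real.sqrt B / Real.sqrt A * A + B / (Real.sqrt B / Real.sqrt A)) / 2
        = Real.sqrt A * Real.sqrt B := by
      field_simp
      nlinarith [hsa, hsb]
    rw [heq] at this
    exact this

lemma norm_integral_mul_conj (a b : ℝ → ℂ) (ha : Continuous a) (hb : Continuous b) :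
    ‖∫ y in (-1:ℝ)..1, a y * conj' (b y)‖ ≤ Nrm a * Nrm b := by
  refine le_trans (intervalIntegral.norm_integral_le_integral_norm (by norm_num)) ?_
  refine le_trans (le_of_eq (intervalIntegral.integral_congr (fun y _ => ?_))) (cs_mul a b ha hb)
  simp [norm_mul]

lemma norm_integral_pair (g a b : ℝ → ℂ) (hg : ∀ y, ‖g y‖ = 1)
    (ha : Continuous a) (hb : Continuous b) :
    ‖∫ y in (-1:ℝ)..1, g y * (a y * conj' (b y))‖ ≤ Nrm a * Nrm b := by
  refine le_trans (intervalIntegral.norm_integral_le_integral_norm (by norm_num)) ?_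
  refine le_trans (le_of_eq (intervalIntegral.integral_congr (fun y _ => ?_))) (cs_mul a b ha hb)
  simp [norm_mul, hg y]

/-- integration by parts on `[-1,1]`. -/
lemma ibp (p q p' q' : ℝ → ℂ)
    (hp : ∀ y, HasDerivAt p (p' y) y) (hq : ∀ y, HasDerivAt q (q' y) y)
    (hp' : Continuous p') (hq' : Continuous q') :
    ∫ y in (-1:ℝ)..1, p y * q' y
      = p 1 * q 1 - p (-1) * q (-1) - ∫ y in (-1:ℝ)..1, p' y * q y :=
  intervalIntegral.integral_mul_deriv_eq_deriv_mul (fun x _ => hp x) (fun x _ => hq x)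
    (hp'.intervalIntegrable _ _) (hq'.intervalIntegrable _ _)

lemma mul_conj_norm (z : ℂ) : z * conj' z = ((‖z‖^2 : ℝ) : ℂ) := by
  rw [Complex.mul_conj]
  norm_cast
  rw [Complex.normSq_eq_norm_sq]

/-- Construction of the solution `φ` of `φ'' - k²φ = -ψ`, `φ(±1)=0`. -/
lemma exists_dual (k : ℝ) (hk : k ≠ 0) (ψ : ℝ → ℂ) (hψ : Continuous ψ) :
    ∃ φ φ₁ φ₂ : ℝ → ℂ,
      (∀ y, HasDerivAt φ (φ₁ y) y) ∧ (∀ y, HasDerivAt φ₁ (φ₂ y) y) ∧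
      Continuous φ ∧ Continuous φ₁ ∧ Continuous φ₂ ∧
      φ (-1) = 0 ∧ φ 1 = 0 ∧ (∀ y, φ₂ y = (k:ℂ)^2 * φ y - ψ y) := by
  -- basic kernels
  set c : ℝ → ℂ := fun y => ((Real.cosh (k*y) : ℝ) : ℂ) with hc_def
  set s : ℝ → ℂ := fun y => ((Real.sinh (k*y) : ℝ) : ℂ) with hs_def
  have hlin : ∀ y : ℝ, HasDerivAt (fun z : ℝ => k * z) k y := by
    intro y
    simpa using (hasDerivAt_id y).const_mul k
  have hc : ∀ y, HasDerivAt c ((k:ℂ) * s y) y := by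
    intro y
    have h1 : HasDerivAt (fun z : ℝ => Real.cosh (k*z)) (Real.sinh (k*y) * k) y :=
      (Real.hasDerivAt_cosh (k*y)).comp y (hlin y)
    have := h1.ofReal_comp
    convert this using 1
    simp only [hs_def]
    push_cast
    ring
  have hs : ∀ y, HasDerivAt s ((k:ℂ) * c y) y := by
    intro y
    have h1 : HasDerivAt (fun z : ℝ => Real.sinh (k*z)) (Real.cosh (k*y) * k) y :=
      (Real.hasDerivAt_sinh (k*y)).comp y (hlin y)
    have := h1.ofReal_comp
    convert this using 1
    simp only [hc_def]
    push_cast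
    ring
  have hc_cont : Continuous c := by
    apply Complex.continuous_ofReal.comp
    exact Real.continuous_cosh.comp (continuous_const.mul continuous_id)
  have hs_cont : Continuous s := by
    apply Complex.continuous_ofReal.comp
    exact Real.continuous_sinh.comp (continuous_const.mul continuous_id)
  have hcs1 : ∀ y, c y * c y - s y * s y = 1 := by
    intro y
    have := Real.cosh_sq_sub_sinh_sq (k*y)
    simp only [hc_def, hs_def]
    push_cast
    linear_combination Complex.cosh_sq_sub_sinh_sq ((k:ℂ)*(y:ℂ))
  -- the integrals
  set CI : ℝ → ℂ := fun y => ∫ x in (-1:ℝ)..y, c x * ψ x with hCI_def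
  set SI : ℝ → ℂ := fun y => ∫ x in (-1:ℝ)..y, s x * ψ x with hSI_def
  have hCI : ∀ y, HasDerivAt CI (c y * ψ y) y := by
    intro y
    exact intervalIntegral.integral_hasDerivAt_right
      (((hc_cont.mul hψ)).intervalIntegrable _ _)
      ((hc_cont.mul hψ).stronglyMeasurableAtFilter _ _)
      ((hc_cont.mul hψ).continuousAt)
  have hSI : ∀ y, HasDerivAt SI (s y * ψ y) y := by
    intro y
    exact intervalIntegral.integral_hasDerivAt_right
      (((hs_cont.mul hψ)).intervalIntegrable _ _)
      ((hs_cont.mul hψ).stronglyMeasurableAtFilter _ _)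
      ((hs_cont.mul hψ).continuousAt)
  have hCI_cont : Continuous CI := by
    rw [continuous_iff_continuousAt]; exact fun y => (hCI y).continuousAt
  have hSI_cont : Continuous SI := by
    rw [continuous_iff_continuousAt]; exact fun y => (hSI y).continuousAt
  -- particular solution
  set P : ℝ → ℂ := fun y => (-(1:ℂ)/k) * (s y * CI y - c y * SI y) with hP_def
  set P1 : ℝ → ℂ := fun y => -(c y * CI y - s y * SI y) with hP1_def
  set P2 : ℝ → ℂ := fun y => (k:ℂ)^2 * P y - ψ y with hP2_def
  have hkC : (k:ℂ) ≠ 0 := by exact_mod_cast hk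
  have hP1 : ∀ y, HasDerivAt P (P1 y) y := by
    intro y
    have h1 : HasDerivAt (fun y => s y * CI y - c y * SI y)
        (((k:ℂ) * c y * CI y + s y * (c y * ψ y)) - ((k:ℂ) * s y * SI y + c y * (s y * ψ y))) y :=
      ((hs y).mul (hCI y)).sub ((hc y).mul (hSI y))
    have := h1.const_mul (-(1:ℂ)/k)
    refine this.congr_deriv (Eq.symm ?_)
    simp only [hP1_def]
    field_simp
    ring
  have hP2 : ∀ y, HasDerivAt P1 (P2 y) y := by
    intro y
    have h1 : HasDerivAt (fun y => c y * CI y - s y * SI y)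
        (((k:ℂ) * s y * CI y + c y * (c y * ψ y)) - ((k:ℂ) * c y * SI y + s y * (s y * ψ y))) y :=
      ((hc y).mul (hCI y)).sub ((hs y).mul (hSI y))
    have h2 := h1.neg
    refine h2.congr_deriv (Eq.symm ?_)
    have h3 := hcs1 y
    simp only [hP2_def, hP_def]
    field_simp
    linear_combination ψ y * h3
  have hP_cont : Continuous P := by
    rw [continuous_iff_continuousAt]; exact fun y => (hP1 y).continuousAt
  have hP1_cont : Continuous P1 := by
    rw [continuous_iff_continuousAt]; exact fun y => (hP2 y).continuousAt
  have hP2_cont : Continuous P2 := by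
    simp only [hP2_def]
    exact (continuous_const.mul hP_cont).sub hψ
  have hPm1 : P (-1) = 0 := by
    simp only [hP_def, hCI_def, hSI_def]
    rw [intervalIntegral.integral_same, intervalIntegral.integral_same]
    ring
  -- homogeneous correction
  have hdne : ((Real.sinh (2*k) : ℝ) : ℂ) ≠ 0 := by
    simp only [ne_eq, Complex.ofReal_eq_zero, Real.sinh_eq_zero]
    intro h
    exact hk (by linarith)
  set d : ℂ := ((Real.sinh (2*k) : ℝ) : ℂ) with hd_def
  set g : ℝ → ℂ := fun y => ((Real.sinh (k*(y+1)) : ℝ) : ℂ) * d⁻¹ with hg_def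
  set g1 : ℝ → ℂ := fun y => (k:ℂ) * ((Real.cosh (k*(y+1)) : ℝ) : ℂ) * d⁻¹ with hg1_def
  set g2 : ℝ → ℂ := fun y => (k:ℂ)^2 * g y with hg2_def
  have hlin2 : ∀ y : ℝ, HasDerivAt (fun z : ℝ => k * (z+1)) k y := by
    intro y
    simpa using ((hasDerivAt_id y).add_const 1).const_mul k
  have hg1 : ∀ y, HasDerivAt g (g1 y) y := by
    intro y
    have h1 : HasDerivAt (fun z : ℝ => Real.sinh (k*(z+1))) (Real.cosh (k*(y+1)) * k) y := by
      have := (Real.hasDerivAt_sinh (k*(y+1))).comp y (hlin2 y); exact this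
    have := (h1.ofReal_comp).mul_const d⁻¹
    refine this.congr_deriv (Eq.symm ?_)
    simp only [hg1_def]
    push_cast
    ring
  have hg2 : ∀ y, HasDerivAt g1 (g2 y) y := by
    intro y
    have h1 : HasDerivAt (fun z : ℝ => Real.cosh (k*(z+1))) (Real.sinh (k*(y+1)) * k) y := by
      have := (Real.hasDerivAt_cosh (k*(y+1))).comp y (hlin2 y); exact this
    have := ((h1.ofReal_comp).const_mul (k:ℂ)).mul_const d⁻¹
    refine this.congr_deriv (Eq.symm ?_)
    simp only [hg2_def, hg_def]
    push_cast
    ring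
  have hg_cont : Continuous g := by
    rw [continuous_iff_continuousAt]; exact fun y => (hg1 y).continuousAt
  have hg1_cont : Continuous g1 := by
    rw [continuous_iff_continuousAt]; exact fun y => (hg2 y).continuousAt
  have hgm1 : g (-1) = 0 := by
    simp only [hg_def]
    norm_num
  have hg2_cont : Continuous g2 := by
    simp only [hg2_def]
    exact continuous_const.mul hg_cont
  have hg1' : g 1 = 1 := by
    simp only [hg_def, hd_def]
    have : k * ((1:ℝ)+1) = 2*k := by ring
    rw [this]
    exact mul_inv_cancel₀ hdne
  -- final function
  refine ⟨fun y => P y - P 1 * g y, fun y => P1 y - P 1 * g1 y, fun y => P2 y - P 1 * g2 y,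
    ?_, ?_, ?_, ?_, ?_, ?_, ?_, ?_⟩
  · exact fun y => (hP1 y).sub ((hg1 y).const_mul (P 1))
  · exact fun y => (hP2 y).sub ((hg2 y).const_mul (P 1))
  · exact hP_cont.sub (continuous_const.mul hg_cont)
  · exact hP1_cont.sub (continuous_const.mul hg1_cont)
  · exact hP2_cont.sub (continuous_const.mul hg2_cont)
  · show P (-1) - P 1 * g (-1) = 0
    rw [hPm1, hgm1]; ring
  · show P 1 - P 1 * g 1 = 0
    rw [hg1']; ring
  · intro y
    show P2 y - P 1 * g2 y = _
    simp only [hP2_def, hg2_def]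
    ring

lemma deriv_facts (f : ℝ → ℂ) (hf : ContDiff ℝ 2 f) :
    (∀ y, HasDerivAt f (deriv f y) y) ∧ (∀ y, HasDerivAt (deriv f) (deriv (deriv f) y) y) ∧
    Continuous f ∧ Continuous (deriv f) ∧ Continuous (deriv (deriv f)) := by
  have h2 : ContDiff ℝ (1+1) f := by
    convert hf using 2
    norm_num
  have hd : Differentiable ℝ f := (contDiff_succ_iff_deriv.mp h2).1
  have hd1 : ContDiff ℝ 1 (deriv f) := (contDiff_succ_iff_deriv.mp h2).2.2
  have hd1' : Differentiable ℝ (deriv f) := hd1.differentiable one_ne_zero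
  exact ⟨fun y => (hd y).hasDerivAt, fun y => (hd1' y).hasDerivAt, hf.continuous,
    hd1.continuous, hd1.continuous_deriv le_rfl⟩

set_option maxHeartbeats 2000000 in
/-- High-frequency inviscid damping estimate:
`|k|⁴ ‖ψ‖ ≤ C (1+t)^{-2} ‖(∂_y,k)²(e^{ikyt}w)‖` for `|k| ≥ 1`. -/
theorem psi_highfreq_second :
    ∃ C > (0 : ℝ), ∀ (k t : ℝ) (ψ w : ℝ → ℂ),
      1 ≤ |k| → 0 ≤ t →
      ContDiff ℝ 2 ψ → ContDiff ℝ 2 w →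
      ψ (-1) = 0 → ψ 1 = 0 → w (-1) = 0 → w 1 = 0 →
      (∀ y ∈ Ioo (-1 : ℝ) 1, deriv (deriv ψ) y - (k : ℂ) ^ 2 * ψ y = -w y) →
      |k| ^ 4 * Real.sqrt (L2sq ψ)
        ≤ C * ((1 + t) ^ 2)⁻¹ * Real.sqrt
            (L2sq (deriv (deriv (ew k t w))) + k ^ 2 * L2sq (deriv (ew k t w))
              + k ^ 4 * L2sq w) := by
  refine ⟨12, by norm_num, ?_⟩
  intro k t ψ w hk ht hψcd hwcd hψm hψp hwm hwp hode
  have hk0 : k ≠ 0 := by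
    intro h
    rw [h, abs_zero] at hk
    linarith
  have hkC : (k:ℂ) ≠ 0 := by exact_mod_cast hk0
  have hk2 : (0:ℝ) < k^2 := by positivity
  have hkabs : (0:ℝ) < |k| := abs_pos.mpr hk0
  -- basic derivatives
  obtain ⟨hψ1, hψ2, hψc, hψ1c, hψ2c⟩ := deriv_facts ψ hψcd
  obtain ⟨hw1, hw2, hwc, hw1c, hw2c⟩ := deriv_facts w hwcd
  set ψ₂ : ℝ → ℂ := deriv (deriv ψ) with hψ₂def
  set w₁ : ℝ → ℂ := deriv w with hw₁def
  set w₂ : ℝ → ℂ := deriv (deriv w) with hw₂def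
  -- oscillating factors
  set c : ℂ := Complex.I * k * t with hc_def
  set e : ℝ → ℂ := fun y => Complex.exp (Complex.I * (k:ℂ) * (y:ℂ) * (t:ℂ)) with he_def
  set eb : ℝ → ℂ := fun y => Complex.exp (-(Complex.I * (k:ℂ) * (y:ℂ) * (t:ℂ))) with heb_def
  have he : ∀ y, HasDerivAt e (c * e y) y := by
    intro y
    have h0 : HasDerivAt (fun z : ℂ => Complex.I * (k:ℂ) * z * (t:ℂ)) c (y:ℂ) := by
      simpa [hc_def, mul_comm, mul_assoc, mul_left_comm] using
        (((hasDerivAt_id ((y:ℝ):ℂ)).const_mul (Complex.I * (k:ℂ))).mul_const ((t:ℂ)))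
    have h1 := (h0.comp_ofReal).cexp
    convert h1 using 1
    ring
  have heb : ∀ y, HasDerivAt eb (-c * eb y) y := by
    intro y
    have h0 : HasDerivAt (fun z : ℂ => -(Complex.I * (k:ℂ) * z * (t:ℂ))) (-c) (y:ℂ) := by
      have := (((hasDerivAt_id ((y:ℝ):ℂ)).const_mul (Complex.I * (k:ℂ))).mul_const ((t:ℂ))).neg
      refine this.congr_deriv (Eq.symm ?_)
      simp [hc_def]
    have h1 := (h0.comp_ofReal).cexp
    convert h1 using 1
    ring
  have hec : Continuous e := by
    rw [continuous_iff_continuousAt]; exact fun y => (he y).continuousAt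
  have hebc : Continuous eb := by
    rw [continuous_iff_continuousAt]; exact fun y => (heb y).continuousAt
  have hebe : ∀ y, eb y * e y = 1 := by
    intro y
    rw [he_def, heb_def]
    simp only [← Complex.exp_add]
    simp
  have hnorme : ∀ y, ‖e y‖ = 1 := by
    intro y
    have h1 : Complex.I * (k:ℂ) * (y:ℂ) * (t:ℂ) = ((k*y*t : ℝ) : ℂ) * Complex.I := by
      push_cast; ring
    rw [he_def]
    simp only [h1]
    rw [Complex.norm_exp_ofReal_mul_I]
  have hnormeb : ∀ y, ‖eb y‖ = 1 := by
    intro y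
    have h1 : -(Complex.I * (k:ℂ) * (y:ℂ) * (t:ℂ)) = ((-(k*y*t) : ℝ) : ℂ) * Complex.I := by
      push_cast; ring
    rw [heb_def]
    simp only [h1]
    rw [Complex.norm_exp_ofReal_mul_I]
  -- f = ew and its derivatives
  have hewdef : ew k t w = fun y => e y * w y := rfl
  set f₁ : ℝ → ℂ := fun y => c * (e y * w y) + e y * w₁ y with hf₁def
  set f₂ : ℝ → ℂ := fun y => c * (c * (e y * w y) + e y * w₁ y) + (c * e y * w₁ y + e y * w₂ y)
    with hf₂def
  have hf1 : ∀ y, HasDerivAt (ew k t w) (f₁ y) y := by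
    intro y
    have h1 := (he y).mul (hw1 y)
    rw [hewdef]
    refine h1.congr_deriv (Eq.symm ?_)
    simp only [hf₁def]
    ring
  have hf2 : ∀ y, HasDerivAt f₁ (f₂ y) y := by
    intro y
    have h1 := (((he y).mul (hw1 y)).const_mul c).add ((he y).mul (hw2 y))
    refine h1.congr_deriv (Eq.symm ?_)
    simp only [hf₂def]
    ring
  have hf1c : Continuous f₁ := by
    rw [continuous_iff_continuousAt]; exact fun y => (hf2 y).continuousAt
  have hf2c : Continuous f₂ := by
    simp only [hf₂def]
    fun_prop
  have hfc : Continuous (ew k t w) := by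
    rw [hewdef]; exact hec.mul hwc
  have hfm : ew k t w (-1) = 0 := by
    rw [hewdef]; simp [hwm]
  have hfp : ew k t w 1 = 0 := by
    rw [hewdef]; simp [hwp]
  -- the dual function
  obtain ⟨φ, φ₁, φ₂, hφ1, hφ2, hφc, hφ1c, hφ2c, hφbm, hφbp, hφeq⟩ := exists_dual k hk0 ψ hψc
  have hφc1 : ∀ y, HasDerivAt (fun x => conj' (φ x)) (conj' (φ₁ y)) y := fun y => (hφ1 y).star
  have hφc2 : ∀ y, HasDerivAt (fun x => conj' (φ₁ x)) (conj' (φ₂ y)) y := fun y => (hφ2 y).star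
  have hφcc : Continuous (fun x => conj' (φ x)) := continuous_star.comp hφc
  have hφ1cc : Continuous (fun x => conj' (φ₁ x)) := continuous_star.comp hφ1c
  have hφ2cc : Continuous (fun x => conj' (φ₂ x)) := continuous_star.comp hφ2c
  have hφbmc : conj' (φ (-1)) = 0 := by rw [hφbm]; simp
  have hφbpc : conj' (φ 1) = 0 := by rw [hφbp]; simp
  -- elementary L² identities
  have hφφ : ∫ y in (-1:ℝ)..1, φ y * conj' (φ y) = ((L2sq φ : ℝ) : ℂ) := by
    rw [show ((L2sq φ : ℝ) : ℂ) = ∫ y in (-1:ℝ)..1, ((‖φ y‖^2 : ℝ) : ℂ) from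
      (intervalIntegral.integral_ofReal).symm]
    exact intervalIntegral.integral_congr fun y _ => mul_conj_norm (φ y)
  have hφ1φ1 : ∫ y in (-1:ℝ)..1, φ₁ y * conj' (φ₁ y) = ((L2sq φ₁ : ℝ) : ℂ) := by
    rw [show ((L2sq φ₁ : ℝ) : ℂ) = ∫ y in (-1:ℝ)..1, ((‖φ₁ y‖^2 : ℝ) : ℂ) from
      (intervalIntegral.integral_ofReal).symm]
    exact intervalIntegral.integral_congr fun y _ => mul_conj_norm (φ₁ y)
  have hψψ : ∫ y in (-1:ℝ)..1, ψ y * conj' (ψ y) = ((L2sq ψ : ℝ) : ℂ) := by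
    rw [show ((L2sq ψ : ℝ) : ℂ) = ∫ y in (-1:ℝ)..1, ((‖ψ y‖^2 : ℝ) : ℂ) from
      (intervalIntegral.integral_ofReal).symm]
    exact intervalIntegral.integral_congr fun y _ => mul_conj_norm (ψ y)
  -- ID2 : ∫ ψ conj φ = k² L2sq φ + L2sq φ₁
  have hIBP2 := ibp φ₁ (fun x => conj' (φ x)) φ₂ (fun x => conj' (φ₁ x)) hφ2 hφc1 hφ2c hφ1cc
  rw [hφbmc, hφbpc, mul_zero, mul_zero, sub_zero, zero_sub] at hIBP2
  have hID2 : ∫ y in (-1:ℝ)..1, ψ y * conj' (φ y) = ((k^2 * L2sq φ + L2sq φ₁ : ℝ) : ℂ) := by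
    have hsub : ∫ y in (-1:ℝ)..1, ψ y * conj' (φ y)
        = ∫ y in (-1:ℝ)..1, ((k:ℂ)^2 * (φ y * conj' (φ y)) - φ₂ y * conj' (φ y)) := by
      refine intervalIntegral.integral_congr fun y _ => ?_
      have h := hφeq y
      have : ψ y = (k:ℂ)^2 * φ y - φ₂ y := by linear_combination h
      rw [this]; ring
    rw [hsub, intervalIntegral.integral_sub (f := fun y => (k:ℂ)^2 * (φ y * conj' (φ y)))
        (g := fun y => φ₂ y * conj' (φ y))
        (((continuous_const.mul (hφc.mul hφcc))).intervalIntegrable _ _)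
        ((hφ2c.mul hφcc).intervalIntegrable _ _),
      intervalIntegral.integral_const_mul, hφφ]
    have hIBP2' : ∫ y in (-1:ℝ)..1, φ₂ y * conj' (φ y)
        = -((L2sq φ₁ : ℝ) : ℂ) := by
      rw [← hφ1φ1]; linear_combination hIBP2
    rw [hIBP2']
    push_cast
    ring
  -- bounds on φ from ID2
  have hbnd2 : k^2 * L2sq φ + L2sq φ₁ ≤ Nrm ψ * Nrm φ := by
    have h1 := norm_integral_mul_conj ψ φ hψc hφc
    rw [hID2] at h1
    have h2 : ‖((k^2 * L2sq φ + L2sq φ₁ : ℝ) : ℂ)‖ = k^2 * L2sq φ + L2sq φ₁ := by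
      rw [Complex.norm_real, Real.norm_eq_abs]
      exact abs_of_nonneg (add_nonneg (mul_nonneg hk2.le (L2sq_nonneg φ)) (L2sq_nonneg φ₁))
    rw [h2] at h1
    exact h1
  -- elliptic bounds on φ
  have hNφ : k^2 * Nrm φ ≤ Nrm ψ := by
    have h1 : k^2 * (Nrm φ)^2 ≤ Nrm ψ * Nrm φ := by
      rw [Nrm_sq]
      nlinarith [L2sq_nonneg φ₁, hbnd2]
    rcases eq_or_lt_of_le (Nrm_nonneg φ) with h | h
    · rw [← h, mul_zero]; exact Nrm_nonneg ψ
    · nlinarith [h1, h]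
  have hNφ₁ : |k| * Nrm φ₁ ≤ Nrm ψ := by
    have h1 : (Nrm φ₁)^2 ≤ Nrm ψ * Nrm φ := by
      rw [Nrm_sq]
      nlinarith [hbnd2, mul_nonneg hk2.le (L2sq_nonneg φ)]
    apply sq_le_aux (mul_nonneg (abs_nonneg k) (Nrm_nonneg φ₁)) (Nrm_nonneg ψ)
    have h2 : k^2 * (Nrm ψ * Nrm φ) ≤ Nrm ψ * Nrm ψ := by
      nlinarith [hNφ, Nrm_nonneg ψ]
    calc (|k| * Nrm φ₁)^2 = k^2 * (Nrm φ₁)^2 := by rw [mul_pow, _root_.sq_abs]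
      _ ≤ k^2 * (Nrm ψ * Nrm φ) := by nlinarith [h1, hk2]
      _ ≤ Nrm ψ * Nrm ψ := h2
      _ = (Nrm ψ)^2 := by ring
  have hNφ₂ : Nrm φ₂ ≤ 2 * Nrm ψ := by
    have hpt : ∀ y : ℝ, ‖φ₂ y‖^2 ≤ (k^2*‖φ y‖ + ‖ψ y‖)^2 := by
      intro y
      have h1 : ‖φ₂ y‖ ≤ k^2*‖φ y‖ + ‖ψ y‖ := by
        rw [hφeq y]
        refine le_trans (norm_sub_le _ _) ?_
        have h2 : ‖(k:ℂ)^2 * φ y‖ = k^2 * ‖φ y‖ := by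
          rw [norm_mul, norm_pow, Complex.norm_real, Real.norm_eq_abs, _root_.sq_abs]
        rw [h2]
      nlinarith [norm_nonneg (φ₂ y), norm_nonneg (φ y), norm_nonneg (ψ y), h1]
    have hL : L2sq φ₂ ≤ ∫ y in (-1:ℝ)..1, (k^2*‖φ y‖ + ‖ψ y‖)^2 := by
      rw [show L2sq φ₂ = ∫ y in (-1:ℝ)..1, ‖φ₂ y‖^2 from rfl]
      apply intervalIntegral.integral_mono_on (by norm_num)
      · exact ((hφ2c.norm.pow 2)).intervalIntegrable _ _
      · exact (((continuous_const.mul hφc.norm).add hψc.norm).pow 2).intervalIntegrable _ _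
      · exact fun x _ => hpt x
    have hexp : ∫ y in (-1:ℝ)..1, (k^2*‖φ y‖ + ‖ψ y‖)^2
        = k^4 * L2sq φ + 2*k^2*(∫ y in (-1:ℝ)..1, ‖φ y‖*‖ψ y‖) + L2sq ψ := by
      have h1 : ∀ y:ℝ, (k^2*‖φ y‖ + ‖ψ y‖)^2
          = k^4 * ‖φ y‖^2 + 2*k^2*(‖φ y‖*‖ψ y‖) + ‖ψ y‖^2 := fun y => by ring
      rw [intervalIntegral.integral_congr (fun y _ => h1 y)]
      rw [intervalIntegral.integral_add (f := fun x => k^4*‖φ x‖^2 + 2*k^2*(‖φ x‖*‖ψ x‖))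
          (g := fun x => ‖ψ x‖^2) (((continuous_const.mul (hφc.norm.pow 2)).add
            (continuous_const.mul (hφc.norm.mul hψc.norm))).intervalIntegrable _ _)
          ((hψc.norm.pow 2).intervalIntegrable _ _),
        intervalIntegral.integral_add (f := fun x => k^4*‖φ x‖^2) (g := fun x => 2*k^2*(‖φ x‖*‖ψ x‖))
          ((continuous_const.mul (hφc.norm.pow 2)).intervalIntegrable _ _)
          ((continuous_const.mul (hφc.norm.mul hψc.norm)).intervalIntegrable _ _),
        intervalIntegral.integral_const_mul, intervalIntegral.integral_const_mul]
      rfl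
    have hcs := cs_mul φ ψ hφc hψc
    have hfin : L2sq φ₂ ≤ (k^2 * Nrm φ + Nrm ψ)^2 := by
      have e1 : (k^2 * Nrm φ + Nrm ψ)^2
          = k^4 * (Nrm φ)^2 + 2*k^2*(Nrm φ * Nrm ψ) + (Nrm ψ)^2 := by ring
      rw [e1, Nrm_sq, Nrm_sq]
      have h3 := le_trans hL (le_of_eq hexp)
      nlinarith [hcs, hk2, mul_le_mul_of_nonneg_left hcs hk2.le, h3]
    apply sq_le_aux (Nrm_nonneg φ₂) (by linarith [Nrm_nonneg ψ])
    rw [Nrm_sq]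
    have h9 : (k^2*Nrm φ + Nrm ψ)^2 ≤ (2*Nrm ψ)^2 := by
      nlinarith [hNφ, mul_nonneg hk2.le (Nrm_nonneg φ), Nrm_nonneg ψ,
        mul_nonneg (sub_nonneg.mpr hNφ) (add_nonneg (add_nonneg (Nrm_nonneg ψ) (Nrm_nonneg ψ))
          (add_nonneg (Nrm_nonneg ψ) (mul_nonneg hk2.le (Nrm_nonneg φ))))]
    linarith [hfin, h9]
  -- ID3 : ∫ w conj φ = L2sq ψ
  have hIBP3a := ibp (deriv ψ) (fun x => conj' (φ x)) ψ₂ (fun x => conj' (φ₁ x)) hψ2 hφc1 hψ2c hφ1cc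
  rw [hφbmc, hφbpc, mul_zero, mul_zero, sub_zero, zero_sub] at hIBP3a
  have hIBP3b := ibp ψ (fun x => conj' (φ₁ x)) (deriv ψ) (fun x => conj' (φ₂ x)) hψ1 hφc2 hψ1c hφ2cc
  rw [hψm, hψp, zero_mul, zero_mul, sub_zero, zero_sub] at hIBP3b
  have hφc2eq : ∀ y : ℝ, conj' (φ₂ y) = (k:ℂ)^2 * conj' (φ y) - conj' (ψ y) := by
    intro y
    rw [hφeq y, map_sub, map_mul, map_pow, Complex.conj_ofReal]
  have hC : ∫ y in (-1:ℝ)..1, ψ y * conj' (φ₂ y)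
      = (k:ℂ)^2 * (∫ y in (-1:ℝ)..1, ψ y * conj' (φ y)) - ((L2sq ψ : ℝ) : ℂ) := by
    have h1 : ∫ y in (-1:ℝ)..1, ψ y * conj' (φ₂ y)
        = ∫ y in (-1:ℝ)..1, ((k:ℂ)^2 * (ψ y * conj' (φ y)) - ψ y * conj' (ψ y)) := by
      refine intervalIntegral.integral_congr fun y _ => ?_
      rw [hφc2eq y]; ring
    rw [h1, intervalIntegral.integral_sub (f := fun y => (k:ℂ)^2 * (ψ y * conj' (φ y)))
        (g := fun y => ψ y * conj' (ψ y))
        ((continuous_const.mul (hψc.mul hφcc)).intervalIntegrable _ _)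
        ((hψc.mul (show Continuous (fun y => conj' (ψ y)) from
          continuous_star.comp hψc)).intervalIntegrable _ _),
      intervalIntegral.integral_const_mul, hψψ]
  have hcongr : ∫ y in (-1:ℝ)..1, w y * conj' (φ y)
      = ∫ y in (-1:ℝ)..1, ((k:ℂ)^2 * (ψ y * conj' (φ y)) - ψ₂ y * conj' (φ y)) := by
    rw [intervalIntegral.integral_of_le (by norm_num : (-1:ℝ) ≤ 1),
      intervalIntegral.integral_of_le (by norm_num : (-1:ℝ) ≤ 1),
      MeasureTheory.integral_Ioc_eq_integral_Ioo, MeasureTheory.integral_Ioc_eq_integral_Ioo]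
    refine MeasureTheory.setIntegral_congr_fun measurableSet_Ioo (fun y hy => ?_)
    have h := hode y hy
    have hw' : w y = (k:ℂ)^2 * ψ y - ψ₂ y := by linear_combination h
    rw [hw']; ring
  have hID3 : ∫ y in (-1:ℝ)..1, w y * conj' (φ y) = ((L2sq ψ : ℝ) : ℂ) := by
    rw [hcongr, intervalIntegral.integral_sub (f := fun y => (k:ℂ)^2 * (ψ y * conj' (φ y)))
        (g := fun y => ψ₂ y * conj' (φ y))
        ((continuous_const.mul (hψc.mul hφcc)).intervalIntegrable _ _)
        ((hψ2c.mul hφcc).intervalIntegrable _ _),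
      intervalIntegral.integral_const_mul]
    linear_combination -hIBP3a + hIBP3b - hC
  -- E1 : k² ‖ψ‖ ≤ ‖w‖
  have hE1 : k^2 * Nrm ψ ≤ Nrm w := by
    have h1 := norm_integral_mul_conj w φ hwc hφc
    rw [hID3, Complex.norm_real, Real.norm_eq_abs, _root_.abs_of_nonneg (L2sq_nonneg ψ)] at h1
    rcases eq_or_lt_of_le (Nrm_nonneg ψ) with h | h
    · rw [← h, mul_zero]; exact Nrm_nonneg w
    · have h2 : (Nrm ψ)^2 ≤ Nrm w * Nrm φ := by rw [Nrm_sq]; exact h1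
      nlinarith [mul_le_mul_of_nonneg_left h2 hk2.le,
        mul_le_mul_of_nonneg_left hNφ (Nrm_nonneg w), h]
  -- ID5 setup
  set u : ℝ → ℂ := fun y => ew k t w y * conj' (φ y) with hu_def
  set u₁ : ℝ → ℂ := fun y => f₁ y * conj' (φ y) + ew k t w y * conj' (φ₁ y) with hu₁def
  set u₂ : ℝ → ℂ := fun y => f₂ y * conj' (φ y) + 2*(f₁ y * conj' (φ₁ y))
    + ew k t w y * conj' (φ₂ y) with hu₂def
  have hud1 : ∀ y, HasDerivAt u (u₁ y) y := fun y => (hf1 y).mul (hφc1 y)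
  have hud2 : ∀ y, HasDerivAt u₁ (u₂ y) y := by
    intro y
    have h1 := ((hf2 y).mul (hφc1 y)).add ((hf1 y).mul (hφc2 y))
    refine h1.congr_deriv (Eq.symm ?_)
    simp only [hu₂def, hu₁def]
    ring
  have huc : Continuous u := hfc.mul hφcc
  have hu₁c : Continuous u₁ := (hf1c.mul hφcc).add (hfc.mul hφ1cc)
  have hu₂c : Continuous u₂ := ((hf2c.mul hφcc).add
    (continuous_const.mul (hf1c.mul hφ1cc))).add (hfc.mul hφ2cc)
  have hubm : u (-1) = 0 := by simp only [hu_def]; rw [hfm, zero_mul]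
  have hubp : u 1 = 0 := by simp only [hu_def]; rw [hfp, zero_mul]
  have hu₁bm : u₁ (-1) = 0 := by
    simp only [hu₁def]; rw [hfm, hφbm, zero_mul, map_zero, mul_zero, add_zero]
  have hu₁bp : u₁ 1 = 0 := by
    simp only [hu₁def]; rw [hfp, hφbp, zero_mul, map_zero, mul_zero, add_zero]
  -- IBP twice against eb
  have hA := ibp (fun y => -c * eb y) u (fun y => -c * (-c * eb y)) u₁
    (fun y => (heb y).const_mul (-c)) hud1
    (continuous_const.mul (continuous_const.mul hebc)) hu₁c
  rw [hubm, hubp, mul_zero, mul_zero, sub_zero, zero_sub] at hA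
  have hB := ibp eb u₁ (fun y => -c * eb y) u₂ heb hud2 (continuous_const.mul hebc) hu₂c
  rw [hu₁bm, hu₁bp, mul_zero, mul_zero, sub_zero, zero_sub] at hB
  have hA1 : ∫ y in (-1:ℝ)..1, (-c * eb y) * u₁ y
      = -c * ∫ y in (-1:ℝ)..1, eb y * u₁ y := by
    rw [← intervalIntegral.integral_const_mul]
    exact intervalIntegral.integral_congr fun y _ => by ring
  have hA2 : ∫ y in (-1:ℝ)..1, (-c * (-c * eb y)) * u y
      = c^2 * ∫ y in (-1:ℝ)..1, eb y * u y := by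
    rw [← intervalIntegral.integral_const_mul]
    exact intervalIntegral.integral_congr fun y _ => by ring
  have hebu : ∫ y in (-1:ℝ)..1, eb y * u y = ((L2sq ψ : ℝ) : ℂ) := by
    have hptw : ∀ y : ℝ, eb y * u y = w y * conj' (φ y) := by
      intro y
      simp only [hu_def, hewdef]
      calc eb y * (e y * w y * conj' (φ y)) = (eb y * e y) * (w y * conj' (φ y)) := by ring
        _ = w y * conj' (φ y) := by rw [hebe y, one_mul]
    rw [intervalIntegral.integral_congr (fun y _ => hptw y), hID3]
  have hc2 : c^2 = -(((k^2*t^2 : ℝ)) : ℂ) := by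
    rw [hc_def]
    push_cast
    have : Complex.I^2 = -1 := Complex.I_sq
    linear_combination ((k:ℂ)^2*(t:ℂ)^2) * this
  have hID5 : ∫ y in (-1:ℝ)..1, eb y * u₂ y
      = -(((k^2*t^2 : ℝ)) : ℂ) * ((L2sq ψ : ℝ) : ℂ) := by
    rw [hA1, hA2, hebu] at hA
    rw [hB, hA1]
    rw [← hc2]
    linear_combination -hA
  -- split and bound
  have hsplit : ∫ y in (-1:ℝ)..1, eb y * u₂ y
      = (∫ y in (-1:ℝ)..1, eb y * (f₂ y * conj' (φ y)))
        + 2*(∫ y in (-1:ℝ)..1, eb y * (f₁ y * conj' (φ₁ y)))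
        + ∫ y in (-1:ℝ)..1, eb y * (ew k t w y * conj' (φ₂ y)) := by
    have h1 : ∀ y : ℝ, eb y * u₂ y = eb y * (f₂ y * conj' (φ y))
        + 2*(eb y * (f₁ y * conj' (φ₁ y))) + eb y * (ew k t w y * conj' (φ₂ y)) := by
      intro y; simp only [hu₂def]; ring
    rw [intervalIntegral.integral_congr (fun y _ => h1 y)]
    rw [intervalIntegral.integral_add
        (f := fun y => eb y * (f₂ y * conj' (φ y)) + 2*(eb y * (f₁ y * conj' (φ₁ y))))
        (g := fun y => eb y * (ew k t w y * conj' (φ₂ y))) (((hebc.mul (hf2c.mul hφcc)).intervalIntegrable _ _).add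
        ((continuous_const.mul (hebc.mul (hf1c.mul hφ1cc))).intervalIntegrable _ _))
      ((hebc.mul (hfc.mul hφ2cc)).intervalIntegrable _ _),
      intervalIntegral.integral_add (f := fun y => eb y * (f₂ y * conj' (φ y)))
        (g := fun y => 2*(eb y * (f₁ y * conj' (φ₁ y))))
        ((hebc.mul (hf2c.mul hφcc)).intervalIntegrable _ _)
        ((continuous_const.mul (hebc.mul (hf1c.mul hφ1cc))).intervalIntegrable _ _),
      intervalIntegral.integral_const_mul]
  have hNf : Nrm (ew k t w) = Nrm w := by
    have : L2sq (ew k t w) = L2sq w := by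
      refine intervalIntegral.integral_congr fun y _ => ?_
      rw [hewdef]
      simp only [norm_mul, hnorme y, one_mul]
    rw [show Nrm (ew k t w) = Real.sqrt (L2sq (ew k t w)) from rfl, this]; rfl
  have hID5n : k^2*t^2 * L2sq ψ ≤ Nrm f₂ * Nrm φ + 2*(Nrm f₁ * Nrm φ₁) + Nrm w * Nrm φ₂ := by
    have h0 : ‖∫ y in (-1:ℝ)..1, eb y * u₂ y‖ = k^2*t^2 * L2sq ψ := by
      rw [hID5, norm_mul, norm_neg, Complex.norm_real, Complex.norm_real,
        Real.norm_eq_abs, Real.norm_eq_abs, _root_.abs_of_nonneg (by positivity : (0:ℝ) ≤ k^2*t^2),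
        _root_.abs_of_nonneg (L2sq_nonneg ψ)]
    rw [← h0, hsplit]
    refine le_trans (norm_add_le _ _) ?_
    refine le_trans (add_le_add_left (norm_add_le _ _) _) ?_
    have e1 := norm_integral_pair eb f₂ φ hnormeb hf2c hφc
    have e2 := norm_integral_pair eb f₁ φ₁ hnormeb hf1c hφ1c
    have e3 := norm_integral_pair eb (ew k t w) φ₂ hnormeb hfc hφ2c
    rw [hNf] at e3
    have e2' : ‖2*(∫ y in (-1:ℝ)..1, eb y * (f₁ y * conj' (φ₁ y)))‖
        ≤ 2*(Nrm f₁ * Nrm φ₁) := by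
      rw [norm_mul]
      have : ‖(2:ℂ)‖ = 2 := by norm_num
      rw [this]
      nlinarith [e2, norm_nonneg (∫ y in (-1:ℝ)..1, eb y * (f₁ y * conj' (φ₁ y)))]
    linarith [e1, e2', e3]
  -- final assembly
  have hd1 : deriv (ew k t w) = f₁ := funext fun y => (hf1 y).deriv
  have hd2 : deriv (deriv (ew k t w)) = f₂ := by
    rw [hd1]; exact funext fun y => (hf2 y).deriv
  rw [hd2, hd1]
  set S : ℝ := Real.sqrt (L2sq f₂ + k^2 * L2sq f₁ + k^4 * L2sq w) with hS_def
  have hS0 : 0 ≤ S := Real.sqrt_nonneg _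
  have hnn1 : 0 ≤ k^2 * L2sq f₁ := mul_nonneg hk2.le (L2sq_nonneg f₁)
  have hnn2 : 0 ≤ k^4 * L2sq w := mul_nonneg (by positivity) (L2sq_nonneg w)
  have hnn0 : 0 ≤ L2sq f₂ := L2sq_nonneg f₂
  have ha : Nrm f₂ ≤ S := by
    rw [show Nrm f₂ = Real.sqrt (L2sq f₂) from rfl]
    apply Real.sqrt_le_sqrt; linarith
  have hb : |k| * Nrm f₁ ≤ S := by
    have h1 : |k| * Nrm f₁ = Real.sqrt (k^2 * L2sq f₁) := by
      rw [Real.sqrt_mul (sq_nonneg k), Real.sqrt_sq_eq_abs]; rfl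
    rw [h1]
    apply Real.sqrt_le_sqrt; linarith
  have hcw : k^2 * Nrm w ≤ S := by
    have h1 : k^2 * Nrm w = Real.sqrt (k^4 * L2sq w) := by
      rw [show k^4 = (k^2)^2 by ring, Real.sqrt_mul (sq_nonneg _), Real.sqrt_sq hk2.le]; rfl
    rw [h1]
    apply Real.sqrt_le_sqrt; linarith
  have hNψ0 : 0 ≤ Nrm ψ := Nrm_nonneg ψ
  have hmain : k^4*t^2 * Nrm ψ ≤ 5 * S := by
    rcases eq_or_lt_of_le hNψ0 with h | h
    · rw [← h, mul_zero]; positivity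
    · have h1 : k^2*t^2*(Nrm ψ)^2
          ≤ Nrm f₂ * Nrm φ + 2*(Nrm f₁ * Nrm φ₁) + Nrm w * Nrm φ₂ := by
        rw [Nrm_sq]
        calc k^2*t^2 * L2sq ψ = k^2*t^2 * L2sq ψ := rfl
          _ ≤ _ := hID5n
      -- multiply by k² and use the φ bounds
      have h2 : k^4*t^2*(Nrm ψ)^2 ≤ (Nrm f₂ + 2*(|k| * Nrm f₁) + 2*(k^2*Nrm w)) * Nrm ψ := by
        have hh1 : Nrm f₂ * (k^2 * Nrm φ) ≤ Nrm f₂ * Nrm ψ :=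
          mul_le_mul_of_nonneg_left hNφ (Nrm_nonneg f₂)
        have hh2 : (|k| * Nrm f₁) * (|k| * Nrm φ₁) ≤ (|k| * Nrm f₁) * Nrm ψ :=
          mul_le_mul_of_nonneg_left hNφ₁ (mul_nonneg (abs_nonneg k) (Nrm_nonneg f₁))
        have hh3 : Nrm w * Nrm φ₂ ≤ Nrm w * (2 * Nrm ψ) :=
          mul_le_mul_of_nonneg_left hNφ₂ (Nrm_nonneg w)
        have hm := mul_le_mul_of_nonneg_left h1 hk2.le
        have hsq : (|k| * Nrm f₁) * (|k| * Nrm φ₁) = k^2*(Nrm f₁ * Nrm φ₁) := by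
          rw [show (|k| * Nrm f₁) * (|k| * Nrm φ₁) = |k|^2 * (Nrm f₁ * Nrm φ₁) by ring,
            _root_.sq_abs]
        have hh2' : k^2*(Nrm f₁ * Nrm φ₁) ≤ (|k| * Nrm f₁) * Nrm ψ := hsq ▸ hh2
        have hh3' := mul_le_mul_of_nonneg_left hh3 hk2.le
        nlinarith [hm, hh1, hh2', hh3']
      have h3 : Nrm f₂ + 2*(|k| * Nrm f₁) + 2*(k^2*Nrm w) ≤ 5 * S := by
        linarith [ha, hb, hcw]
      have h4 : k^4*t^2*(Nrm ψ)^2 ≤ (5*S) * Nrm ψ := by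
        calc k^4*t^2*(Nrm ψ)^2 ≤ (Nrm f₂ + 2*(|k| * Nrm f₁) + 2*(k^2*Nrm w)) * Nrm ψ := h2
          _ ≤ (5*S) * Nrm ψ := mul_le_mul_of_nonneg_right h3 hNψ0
      have h5 : k^4*t^2*Nrm ψ * Nrm ψ ≤ (5*S) * Nrm ψ := by nlinarith [h4]
      exact le_of_mul_le_mul_right (by linarith [h5]) h
  have hE1' : k^4 * Nrm ψ ≤ S := by
    have h1 := mul_le_mul_of_nonneg_left hE1 hk2.le
    calc k^4 * Nrm ψ = k^2*(k^2*Nrm ψ) := by ring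
      _ ≤ k^2 * Nrm w := h1
      _ ≤ S := hcw
  have h2t : (1+t)^2 ≤ 2*(1+t^2) := by nlinarith [sq_nonneg (t-1)]
  have hq : (0:ℝ) < (1+t)^2 := by positivity
  have habs4 : |k|^4 = k^4 := by
    rw [← _root_.abs_pow]; exact _root_.abs_of_nonneg (by positivity)
  rw [habs4, show (12:ℝ)*((1+t)^2)⁻¹*S = 12*S/((1+t)^2) by ring, le_div_iff₀ hq]
  rw [show Real.sqrt (L2sq ψ) = Nrm ψ from rfl]
  nlinarith [hmain, hE1', hS0, hNψ0,
    mul_le_mul_of_nonneg_left h2t (mul_nonneg (by positivity : (0:ℝ) ≤ k^4) hNψ0)]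
end

section
/- There is a universal constant C > 0 such that: for every k ∈ ℝ with 0 < |k| ≤ 1, every t ≥ 0, and all functions ψ, w : [−1,1] → ℂ with ψ twice continuously differentiable, w continuously differentiable, ψ(±1) = 0, w(±1) = 0, and ψ''(y) − k² ψ(y) = −w(y) on (−1,1), one has ( ‖ψ'‖²_{L²} + ‖ψ‖²_{L²} )^{1/2} ≤ C (1 + |k t|)^{−1} ( ‖(e_{k,t} w)'‖²_{L²} + ‖w‖²_{L²} )^{1/2}, where e_{k,t}(y) = e^{i k y t} and (e_{k,t} w)'(y) = e^{ikyt}( w'(y) + i k t w(y) ). -/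
open Set MeasureTheory

lemma memL2_aux {f : ℝ → ℂ} (hf : Continuous f) :
    MemLp f (ENNReal.ofReal 2) (volume.restrict (Ioc (-1:ℝ) 1)) := by
  haveI : IsFiniteMeasure (volume.restrict (Ioc (-1:ℝ) 1)) := by
    constructor
    simp [Real.volume_Ioc]
  obtain ⟨M, hM⟩ := (isCompact_Icc (a := (-1:ℝ)) (b := 1)).exists_bound_of_continuousOn
    hf.continuousOn
  refine MemLp.of_bound hf.aestronglyMeasurable M ?_
  filter_upwards [ae_restrict_mem measurableSet_Ioc] with x hx
  exact hM x (Ioc_subset_Icc_self hx)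

lemma cs_norm {f g : ℝ → ℂ} (hf : Continuous f) (hg : Continuous g) :
    (∫ y in (-1:ℝ)..1, ‖f y‖ * ‖g y‖) ≤
      Real.sqrt (∫ y in (-1:ℝ)..1, ‖f y‖ ^ 2) * Real.sqrt (∫ y in (-1:ℝ)..1, ‖g y‖ ^ 2) := by
  have h2 : Real.HolderConjugate 2 2 := Real.HolderConjugate.two_two
  have key := integral_mul_norm_le_Lp_mul_Lq (μ := volume.restrict (Ioc (-1:ℝ) 1))
    h2 (memL2_aux hf) (memL2_aux hg)
  have e1 : ∀ h : ℝ → ℂ, (∫ y in (-1:ℝ)..1, ‖h y‖ ^ 2) =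
      ∫ a in Ioc (-1:ℝ) 1, ‖h a‖ ^ (2:ℝ) := by
    intro h
    rw [intervalIntegral.integral_of_le (by norm_num : (-1:ℝ) ≤ 1)]
    congr 1
    ext a
    rw [← Real.rpow_natCast ‖h a‖ 2]
    norm_num
  have e2 : (∫ y in (-1:ℝ)..1, ‖f y‖ * ‖g y‖) = ∫ a in Ioc (-1:ℝ) 1, ‖f a‖ * ‖g a‖ :=
    intervalIntegral.integral_of_le (by norm_num)
  rw [e1, e1, e2]
  rw [Real.sqrt_eq_rpow, Real.sqrt_eq_rpow]
  calc ∫ a in Ioc (-1:ℝ) 1, ‖f a‖ * ‖g a‖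
      ≤ (∫ a in Ioc (-1:ℝ) 1, ‖f a‖ ^ (2:ℝ)) ^ (1/2:ℝ) *
        (∫ a in Ioc (-1:ℝ) 1, ‖g a‖ ^ (2:ℝ)) ^ (1/2:ℝ) := key
    _ = _ := by norm_num

lemma cs {f g : ℝ → ℂ} (hf : Continuous f) (hg : Continuous g) :
    ‖∫ y in (-1:ℝ)..1, f y * g y‖ ≤
      Real.sqrt (∫ y in (-1:ℝ)..1, ‖f y‖ ^ 2) * Real.sqrt (∫ y in (-1:ℝ)..1, ‖g y‖ ^ 2) := by
  refine le_trans (intervalIntegral.norm_integral_le_integral_norm (by norm_num)) ?_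
  refine le_trans (le_of_eq ?_) (cs_norm hf hg)
  congr 1
  ext y
  exact norm_mul _ _

lemma mul_star_self (z : ℂ) : z * star z = ((‖z‖ ^ 2 : ℝ) : ℂ) := by
  rw [show star z = starRingEnd ℂ z from rfl, Complex.mul_conj]
  norm_cast
  simp [Complex.normSq_eq_norm_sq]

lemma integral_mul_star (f : ℝ → ℂ) :
    (∫ y in (-1:ℝ)..1, f y * star (f y)) = ((L2sq f : ℝ) : ℂ) := by
  simp_rw [mul_star_self]
  rw [intervalIntegral.integral_ofReal]
  rfl

lemma hasDerivAt_ew {k t : ℝ} {w : ℝ → ℂ} (hw : Differentiable ℝ w) (y : ℝ) :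
    HasDerivAt (ew k t w)
      (Complex.exp (Complex.I * (k:ℂ) * (y:ℂ) * (t:ℂ)) *
        (deriv w y + Complex.I * (k:ℂ) * (t:ℂ) * w y)) y := by
  have h0 : HasDerivAt (fun y : ℝ => (y : ℂ)) 1 y := by
    simpa using (hasDerivAt_id y).ofReal_comp
  have h1 : HasDerivAt (fun y : ℝ => Complex.I * (k : ℂ) * (y : ℂ) * (t : ℂ))
      (Complex.I * k * t) y := by
    have := (h0.const_mul (Complex.I * (k : ℂ))).mul_const (t : ℂ)
    simpa [mul_assoc, mul_comm, mul_left_comm] using this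
  have h2 := h1.cexp
  have h3 : HasDerivAt (ew k t w) (Complex.exp (Complex.I * (k:ℂ) * (y:ℂ) * (t:ℂ)) * (Complex.I * (k:ℂ) * (t:ℂ)) * w y +
      Complex.exp (Complex.I * (k:ℂ) * (y:ℂ) * (t:ℂ)) * deriv w y) y := h2.mul (hw y).hasDerivAt
  convert h3 using 1
  ring

lemma deriv_ew {k t : ℝ} {w : ℝ → ℂ} (hw : Differentiable ℝ w) :
    deriv (ew k t w) = fun y : ℝ =>
      Complex.exp (Complex.I * (k:ℂ) * (y:ℂ) * (t:ℂ)) *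
        (deriv w y + Complex.I * (k:ℂ) * (t:ℂ) * w y) := by
  funext y
  exact (hasDerivAt_ew hw y).deriv

lemma norm_exp_Ikyt (k t y : ℝ) : ‖Complex.exp (Complex.I * (k:ℂ) * (y:ℂ) * (t:ℂ))‖ = 1 := by
  have h : Complex.I * (k : ℂ) * (y : ℂ) * (t : ℂ) = ((k * y * t : ℝ) : ℂ) * Complex.I := by
    push_cast; ring
  rw [h]
  simp [Complex.norm_exp]

set_option maxHeartbeats 1600000 in
/-- Low-frequency stream function estimate:
`‖(∂_y,1)ψ‖ ≤ C (1+|kt|)^{-1} ‖(∂_y,1)(e^{ikyt}w)‖` for `0 < |k| ≤ 1`. -/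
theorem psi_lowfreq_first :
    ∃ C > (0 : ℝ), ∀ (k t : ℝ) (ψ w : ℝ → ℂ),
      k ≠ 0 → |k| ≤ 1 → 0 ≤ t →
      ContDiff ℝ 2 ψ → ContDiff ℝ 1 w →
      ψ (-1) = 0 → ψ 1 = 0 → w (-1) = 0 → w 1 = 0 →
      (∀ y ∈ Ioo (-1 : ℝ) 1, deriv (deriv ψ) y - (k : ℂ) ^ 2 * ψ y = -w y) →
      Real.sqrt (L2sq (deriv ψ) + L2sq ψ)
        ≤ C * (1 + |k * t|)⁻¹ * Real.sqrt (L2sq (deriv (ew k t w)) + L2sq w) := by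
  refine ⟨15, by norm_num, ?_⟩
  intro k t ψ w hk0 hk1 ht hψ hw hb1 hb2 hw1 hw2 heq
  -- regularity
  have h2eq : (2 : WithTop ℕ∞) = 1 + 1 := by norm_num
  obtain ⟨hψd, -, hψ'⟩ := contDiff_succ_iff_deriv.mp (h2eq ▸ hψ)
  have hψd2 : Differentiable ℝ (deriv ψ) := hψ'.differentiable one_ne_zero
  have hcψ : Continuous ψ := hψd.continuous
  have hcψ' : Continuous (deriv ψ) := hψ'.continuous
  have hcψ'' : Continuous (deriv (deriv ψ)) := (contDiff_one_iff_deriv.mp hψ').2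
  have hwd : Differentiable ℝ w := hw.differentiable one_ne_zero
  have hcw : Continuous w := hwd.continuous
  have hcw' : Continuous (deriv w) := (contDiff_one_iff_deriv.mp hw).2
  have hdew := deriv_ew (k := k) (t := t) hwd
  have hcdew : Continuous (deriv (ew k t w)) := by
    rw [hdew]
    exact (Complex.continuous_exp.comp
        (((continuous_const.mul Complex.continuous_ofReal).mul continuous_const))).mul
      (hcw'.add (continuous_const.mul hcw))
  set a := L2sq (deriv ψ) with ha_def
  set b := L2sq ψ with hb_def
  set p := L2sq (deriv (ew k t w)) with hp_def
  set q := L2sq w with hq_def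
  have hL2 : ∀ h : ℝ → ℂ, 0 ≤ L2sq h := fun h => by
    unfold L2sq
    exact intervalIntegral.integral_nonneg (by norm_num) (fun u _ => by positivity)
  have ha : 0 ≤ a := hL2 _
  have hb : 0 ≤ b := hL2 _
  have hp : 0 ≤ p := hL2 _
  have hq : 0 ≤ q := hL2 _
  set I1 : ℂ := ∫ y in (-1:ℝ)..1, w y * star (ψ y) with hI1def
  -- energy identity
  have key1 : (∫ y in (-1:ℝ)..1, deriv (deriv ψ) y * star (ψ y)) +
      (∫ y in (-1:ℝ)..1, deriv ψ y * star (deriv ψ y)) = 0 := by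
    have hfd : ∀ x ∈ uIcc (-1:ℝ) 1, HasDerivAt (fun y => deriv ψ y * star (ψ y))
        (deriv (deriv ψ) x * star (ψ x) + deriv ψ x * star (deriv ψ x)) x :=
      fun x _ => ((hψd2 x).hasDerivAt.mul ((hψd x).hasDerivAt.star))
    have hint : IntervalIntegrable
        (fun x => deriv (deriv ψ) x * star (ψ x) + deriv ψ x * star (deriv ψ x))
        volume (-1) 1 := ((hcψ''.mul hcψ.star).add (hcψ'.mul hcψ'.star)).intervalIntegrable _ _
    have h := intervalIntegral.integral_eq_sub_of_hasDerivAt hfd hint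
    rw [intervalIntegral.integral_add (f := fun x => deriv (deriv ψ) x * star (ψ x))
      (g := fun x => deriv ψ x * star (deriv ψ x)) ((hcψ''.mul hcψ.star).intervalIntegrable _ _)
      ((hcψ'.mul hcψ'.star).intervalIntegrable _ _)] at h
    simpa [hb1, hb2] using h
  have hsub : (∫ y in (-1:ℝ)..1, deriv (deriv ψ) y * star (ψ y))
      = ∫ y in (-1:ℝ)..1, ((k:ℂ)^2 * ψ y - w y) * star (ψ y) := by
    apply intervalIntegral.integral_congr_ae
    have h1 : ∀ᵐ (y:ℝ), y ∉ ({1} : Set ℝ) :=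
      measure_eq_zero_iff_ae_notMem.mp (measure_singleton 1)
    filter_upwards [h1] with y hy1 hyI
    rw [Set.uIoc_of_le (by norm_num : (-1:ℝ) ≤ 1)] at hyI
    have hyo : y ∈ Ioo (-1:ℝ) 1 := ⟨hyI.1, lt_of_le_of_ne hyI.2 (by simpa using hy1)⟩
    have h2 : deriv (deriv ψ) y = (k:ℂ)^2 * ψ y - w y := by
      linear_combination heq y hyo
    rw [h2]
  have hE : I1 = ((a + k^2*b : ℝ) : ℂ) := by
    have hsplit : (fun y : ℝ => ((k:ℂ)^2 * ψ y - w y) * star (ψ y)) =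
        fun y : ℝ => (k:ℂ)^2 * (ψ y * star (ψ y)) - w y * star (ψ y) := by
      funext y; ring
    have h5 : (∫ y in (-1:ℝ)..1, ((k:ℂ)^2 * ψ y - w y) * star (ψ y))
        = (k:ℂ)^2 * ((b : ℝ):ℂ) - I1 := by
      rw [hsplit, intervalIntegral.integral_sub (f := fun y => (k:ℂ)^2 * (ψ y * star (ψ y)))
          (g := fun y => w y * star (ψ y))
          ((continuous_const.mul (hcψ.mul hcψ.star)).intervalIntegrable _ _)
          ((hcw.mul hcψ.star).intervalIntegrable _ _),
        intervalIntegral.integral_const_mul, integral_mul_star]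
    rw [hsub, h5, integral_mul_star] at key1
    push_cast at key1 ⊢
    linear_combination -key1
  have hEnn : 0 ≤ a + k^2*b := by positivity
  have hI1norm : ‖I1‖ = a + k^2*b := by
    rw [hE]
    simp only [Complex.norm_real, Real.norm_eq_abs]
    exact abs_of_nonneg hEnn
  -- oscillatory identity
  have key2 : (∫ y in (-1:ℝ)..1, deriv w y * star (ψ y)) +
      (∫ y in (-1:ℝ)..1, w y * star (deriv ψ y)) = 0 := by
    have hfd : ∀ x ∈ uIcc (-1:ℝ) 1, HasDerivAt (fun y => w y * star (ψ y))
        (deriv w x * star (ψ x) + w x * star (deriv ψ x)) x :=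
      fun x _ => ((hwd x).hasDerivAt.mul ((hψd x).hasDerivAt.star))
    have hint : IntervalIntegrable
        (fun x => deriv w x * star (ψ x) + w x * star (deriv ψ x))
        volume (-1) 1 := ((hcw'.mul hcψ.star).add (hcw.mul hcψ'.star)).intervalIntegrable _ _
    have h := intervalIntegral.integral_eq_sub_of_hasDerivAt hfd hint
    rw [intervalIntegral.integral_add (f := fun x => deriv w x * star (ψ x))
      (g := fun x => w x * star (deriv ψ x)) ((hcw'.mul hcψ.star).intervalIntegrable _ _)
      ((hcw.mul hcψ'.star).intervalIntegrable _ _)] at h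
    simpa [hb1, hb2, hw1, hw2] using h
  set Ee : ℝ → ℂ := fun y => Complex.exp (Complex.I * (k:ℂ) * (y:ℂ) * (t:ℂ)) with hEe
  have hEne : ∀ y, Ee y ≠ 0 := fun y => Complex.exp_ne_zero _
  have hEcont : Continuous Ee :=
    Complex.continuous_exp.comp
      ((continuous_const.mul Complex.continuous_ofReal).mul continuous_const)
  have hEnorm : ∀ y, ‖Ee y‖ = 1 := fun y => norm_exp_Ikyt k t y
  set J : ℂ := ∫ y in (-1:ℝ)..1, ((Ee y)⁻¹ * deriv (ew k t w) y) * star (ψ y) with hJdef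
  set K : ℂ := ∫ y in (-1:ℝ)..1, w y * star (deriv ψ y) with hKdef
  have hsplit2 : (fun y : ℝ => deriv w y * star (ψ y)) = fun y : ℝ =>
      ((Ee y)⁻¹ * deriv (ew k t w) y) * star (ψ y)
        - (Complex.I * (k:ℂ) * (t:ℂ)) * (w y * star (ψ y)) := by
    funext y
    rw [hdew]
    rw [inv_mul_cancel_left₀ (hEne y)]
    ring
  have key2' : Complex.I * (k:ℂ) * (t:ℂ) * I1 = J + K := by
    have h6 : (∫ y in (-1:ℝ)..1, deriv w y * star (ψ y)) =
        J - (Complex.I * (k:ℂ) * (t:ℂ)) * I1 := by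
      rw [hsplit2, intervalIntegral.integral_sub (f := fun y => ((Ee y)⁻¹ * deriv (ew k t w) y) * star (ψ y))
          (g := fun y => (Complex.I * (k:ℂ) * (t:ℂ)) * (w y * star (ψ y)))
          ((((hEcont.inv₀ hEne).mul hcdew).mul hcψ.star).intervalIntegrable _ _)
          ((continuous_const.mul (hcw.mul hcψ.star)).intervalIntegrable _ _),
        intervalIntegral.integral_const_mul]
    rw [h6] at key2
    linear_combination -key2
  -- Cauchy-Schwarz bounds
  have hstarb : (∫ y in (-1:ℝ)..1, ‖star (ψ y)‖ ^ 2) = b := by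
    simp only [norm_star]
    rfl
  have hstara : (∫ y in (-1:ℝ)..1, ‖star (deriv ψ y)‖ ^ 2) = a := by
    simp only [norm_star]
    rfl
  have hI1cs : ‖I1‖ ≤ Real.sqrt q * Real.sqrt b := by
    have h := cs (f := w) (g := fun y => star (ψ y)) hcw hcψ.star
    rw [hstarb] at h
    exact h
  have hJcs : ‖J‖ ≤ Real.sqrt p * Real.sqrt b := by
    have h := cs (f := fun y => (Ee y)⁻¹ * deriv (ew k t w) y)
      (g := fun y => star (ψ y)) ((hEcont.inv₀ hEne).mul hcdew) hcψ.star
    rw [hstarb] at h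
    have e3 : (∫ y in (-1:ℝ)..1, ‖(Ee y)⁻¹ * deriv (ew k t w) y‖ ^ 2) = p := by
      have e4 : ∀ y : ℝ, ‖(Ee y)⁻¹ * deriv (ew k t w) y‖ ^ 2 = ‖deriv (ew k t w) y‖ ^ 2 := by
        intro y
        rw [norm_mul, norm_inv, hEnorm]
        norm_num
      simp_rw [e4]
      rfl
    rw [e3] at h
    exact h
  have hKcs : ‖K‖ ≤ Real.sqrt q * Real.sqrt a := by
    have h := cs (f := w) (g := fun y => star (deriv ψ y)) hcw hcψ'.star
    rw [hstara] at h
    exact h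
  have hosc : |k| * |t| * (a + k^2*b) ≤ Real.sqrt p * Real.sqrt b + Real.sqrt q * Real.sqrt a := by
    have hc : ‖Complex.I * (k:ℂ) * (t:ℂ)‖ = |k| * |t| := by
      simp [norm_mul]
    calc |k| * |t| * (a + k^2*b) = ‖Complex.I * (k:ℂ) * (t:ℂ)‖ * ‖I1‖ := by
          rw [hc, hI1norm]
      _ = ‖Complex.I * (k:ℂ) * (t:ℂ) * I1‖ := (norm_mul _ _).symm
      _ = ‖J + K‖ := by rw [key2']
      _ ≤ ‖J‖ + ‖K‖ := norm_add_le _ _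
      _ ≤ _ := add_le_add hJcs hKcs
  -- Poincaré
  have hpt : ∀ y ∈ Icc (-1:ℝ) 1, ‖ψ y‖ ≤ Real.sqrt a * Real.sqrt 2 := by
    intro y hy
    have hftc : ∫ s in (-1:ℝ)..y, deriv ψ s = ψ y := by
      have h := intervalIntegral.integral_eq_sub_of_hasDerivAt (f := ψ) (f' := deriv ψ)
        (a := (-1:ℝ)) (b := y) (fun x _ => (hψd x).hasDerivAt) (hcψ'.intervalIntegrable _ _)
      rw [h, hb1, sub_zero]
    calc ‖ψ y‖ = ‖∫ s in (-1:ℝ)..y, deriv ψ s‖ := by rw [hftc]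
      _ ≤ ∫ s in (-1:ℝ)..y, ‖deriv ψ s‖ := intervalIntegral.norm_integral_le_integral_norm hy.1
      _ ≤ ∫ s in (-1:ℝ)..1, ‖deriv ψ s‖ := by
          have hadd := intervalIntegral.integral_add_adjacent_intervals
            (a := (-1:ℝ)) (b := y) (c := 1) (μ := volume) (f := fun s => ‖deriv ψ s‖)
            (hcψ'.norm.intervalIntegrable _ _) (hcψ'.norm.intervalIntegrable _ _)
          have hnn : 0 ≤ ∫ s in y..(1:ℝ), ‖deriv ψ s‖ :=
            intervalIntegral.integral_nonneg hy.2 (fun u _ => norm_nonneg _)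
          linarith
      _ = ∫ s in (-1:ℝ)..1, ‖deriv ψ s‖ * ‖(1:ℂ)‖ := by simp
      _ ≤ Real.sqrt (∫ s in (-1:ℝ)..1, ‖deriv ψ s‖ ^ 2) *
            Real.sqrt (∫ s in (-1:ℝ)..1, ‖(1:ℂ)‖ ^ 2) := cs_norm hcψ' continuous_const
      _ = Real.sqrt a * Real.sqrt 2 := by
          have h1 : (∫ _s in (-1:ℝ)..1, ‖(1:ℂ)‖ ^ 2) = 2 := by
            simp
            norm_num
          have h2 : (∫ s in (-1:ℝ)..1, ‖deriv ψ s‖ ^ 2) = a := rfl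
          rw [h1, h2]
  have hba : b ≤ 4*a := by
    have hbound : ∀ y ∈ Icc (-1:ℝ) 1, ‖ψ y‖^2 ≤ 2*a := by
      intro y hy
      have h1 := hpt y hy
      nlinarith [norm_nonneg (ψ y), Real.sq_sqrt ha,
        Real.sq_sqrt (by norm_num : (0:ℝ) ≤ 2), Real.sqrt_nonneg a, Real.sqrt_nonneg 2]
    have hble : (∫ y in (-1:ℝ)..1, ‖ψ y‖^2) ≤ ∫ _y in (-1:ℝ)..1, (2*a) :=
      intervalIntegral.integral_mono_on (by norm_num)
        ((hcψ.norm.pow 2).intervalIntegrable _ _) intervalIntegrable_const hbound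
    have hconst : (∫ _y in (-1:ℝ)..1, (2*a)) = 4*a := by
      simp
      ring
    calc b = ∫ y in (-1:ℝ)..1, ‖ψ y‖^2 := hb_def
      _ ≤ ∫ _y in (-1:ℝ)..1, (2*a) := hble
      _ = 4*a := hconst
  -- final algebra
  clear_value a b p q I1 J K
  set A := Real.sqrt (p + q) with hAdef
  set sE := Real.sqrt (a + k^2*b) with hsEdef
  have hAnn : 0 ≤ A := Real.sqrt_nonneg _
  have hsEnn : 0 ≤ sE := Real.sqrt_nonneg _
  have hsqp : Real.sqrt p ≤ A := Real.sqrt_le_sqrt (by linarith)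
  have hsqq : Real.sqrt q ≤ A := Real.sqrt_le_sqrt (by linarith)
  have hsqa : Real.sqrt a ≤ sE := Real.sqrt_le_sqrt (by nlinarith [sq_nonneg k])
  have hsqb : Real.sqrt b ≤ 2*sE := by
    have h1 : b ≤ 4*(a + k^2*b) := by nlinarith [sq_nonneg k, mul_nonneg (sq_nonneg k) hb]
    have h2 : Real.sqrt (4*(a + k^2*b)) = 2*sE := by
      rw [show (4:ℝ)*(a+k^2*b) = 2^2*(a+k^2*b) by ring, Real.sqrt_mul (by positivity),
        Real.sqrt_sq (by norm_num : (0:ℝ) ≤ 2)]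
    calc Real.sqrt b ≤ Real.sqrt (4*(a + k^2*b)) := Real.sqrt_le_sqrt h1
      _ = 2*sE := h2
  have hE_eq : sE * sE = a + k^2*b := Real.mul_self_sqrt hEnn
  have hsE2A : sE ≤ 2*A := by
    have h1 : sE * sE ≤ (2*A) * sE := by
      calc sE * sE = a + k^2*b := hE_eq
        _ = ‖I1‖ := hI1norm.symm
        _ ≤ Real.sqrt q * Real.sqrt b := hI1cs
        _ ≤ A * (2*sE) := mul_le_mul hsqq hsqb (Real.sqrt_nonneg _) hAnn
        _ = (2*A) * sE := by ring
    rcases eq_or_lt_of_le hsEnn with h | h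
    · rw [← h]
      linarith
    · exact le_of_mul_le_mul_right h1 h
  have hkt2 : |k| * |t| * sE ≤ 3*A := by
    have h1 : |k| * |t| * (sE * sE) ≤ 3*A*sE := by
      calc |k| * |t| * (sE * sE) = |k| * |t| * (a + k^2*b) := by rw [hE_eq]
        _ ≤ Real.sqrt p * Real.sqrt b + Real.sqrt q * Real.sqrt a := hosc
        _ ≤ A * (2*sE) + A * sE := add_le_add
            (mul_le_mul hsqp hsqb (Real.sqrt_nonneg _) hAnn)
            (mul_le_mul hsqq hsqa (Real.sqrt_nonneg _) hAnn)
        _ = 3*A*sE := by ring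
    rcases eq_or_lt_of_le hsEnn with h | h
    · rw [← h, mul_zero]
      linarith
    · have h1' : (|k| * |t| * sE) * sE ≤ (3*A) * sE := by
        calc (|k| * |t| * sE) * sE = |k| * |t| * (sE * sE) := by ring
          _ ≤ 3*A*sE := h1
          _ = (3*A) * sE := by ring
      exact le_of_mul_le_mul_right h1' h
  have hfin1 : (1 + |k*t|) * sE ≤ 5*A := by
    rw [abs_mul]
    nlinarith
  have hLHS : Real.sqrt (a + b) ≤ 3*sE := by
    have h1 : a + b ≤ 9*(a + k^2*b) := by
      nlinarith [mul_nonneg (sq_nonneg k) hb]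
    have h2 : Real.sqrt (9*(a + k^2*b)) = 3*sE := by
      rw [show (9:ℝ)*(a+k^2*b) = 3^2*(a+k^2*b) by ring, Real.sqrt_mul (by positivity),
        Real.sqrt_sq (by norm_num : (0:ℝ) ≤ 3)]
    calc Real.sqrt (a + b) ≤ Real.sqrt (9*(a + k^2*b)) := Real.sqrt_le_sqrt h1
      _ = 3*sE := h2
  have hpos : (0:ℝ) < 1 + |k*t| := by positivity
  have hmain : Real.sqrt (a + b) * (1 + |k*t|) ≤ 15*A := by
    calc Real.sqrt (a + b) * (1 + |k*t|) ≤ (3*sE) * (1 + |k*t|) :=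
          mul_le_mul_of_nonneg_right hLHS (le_of_lt hpos)
      _ = 3*((1 + |k*t|) * sE) := by ring
      _ ≤ 3*(5*A) := by linarith
      _ = 15*A := by ring
  calc Real.sqrt (a + b) = Real.sqrt (a + b) * (1 + |k*t|) * (1 + |k*t|)⁻¹ := by
        field_simp
    _ ≤ 15*A * (1 + |k*t|)⁻¹ := mul_le_mul_of_nonneg_right hmain (by positivity)
    _ = 15 * (1 + |k*t|)⁻¹ * A := by ring
end
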